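/- Let Φ : I → ℝ be a convex function on an interval I of positive real numbers, let T, V be bounded linear invertible operators on a complex Hilbert space H, and let 0 < m < M with [m², M²] contained in the interior of I and m‖Tx‖ ≤ ‖Vx‖ ≤ M‖Tx‖ for all x ∈ H. Then for every x ∈ H with x ≠ 0 one has the Jensen-type inequality ⟨⊙_Φ(V,T)x, x⟩ / ‖Tx‖² ≥ Φ(‖Vx‖²/‖Tx‖²). -/

import Mathlib

variable {H : Type*} [NormedAddCommGroup H] [InnerProductSpace ℂ H] [CompleteSpace H]

/-- `X = |VT⁻¹|² = (T*)⁻¹ V* V T⁻¹`. -/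
noncomputable def qX (V T : (H →L[ℂ] H)ˣ) : H →L[ℂ] H :=
  star (↑(T⁻¹) : H →L[ℂ] H) * (star (V : H →L[ℂ] H) * (V : H →L[ℂ] H)) * (↑(T⁻¹) : H →L[ℂ] H)

/-- The quadratic operator perspective `⊙_Φ(V,T) = T* Φ(X) T`. -/
noncomputable def qPersp (Φ : ℝ → ℝ) (V T : (H →L[ℂ] H)ˣ) : H →L[ℂ] H :=
  star (T : H →L[ℂ] H) * cfc Φ (qX V T) * (T : H →L[ℂ] H)

/-- `|T|² = T*T`. -/
noncomputable def modSq (T : (H →L[ℂ] H)ˣ) : H →L[ℂ] H :=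
  star (T : H →L[ℂ] H) * (T : H →L[ℂ] H)

/-- Supporting line for a convex function at an interior point. -/
lemma exists_support_line {I : Set ℝ} {Φ : ℝ → ℝ} (hΦ : ConvexOn ℝ I Φ) {l : ℝ}
    (hl : l ∈ interior I) : ∃ c : ℝ, ∀ t ∈ I, Φ l + c * (t - l) ≤ Φ t := by
  obtain ⟨ε, hε, hball⟩ := Metric.isOpen_iff.mp isOpen_interior l hl
  have hmem : ∀ δ : ℝ, |δ| < ε → l + δ ∈ I := fun δ hδ =>
    interior_subset (hball (by simpa [Real.dist_eq] using hδ))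
  have ha : l + -(ε/2) ∈ I := hmem _ (by rw [abs_neg, abs_of_pos (by linarith)]; linarith)
  have hb : l + ε/2 ∈ I := hmem _ (by rw [abs_of_pos (by linarith)]; linarith)
  set S : Set ℝ := (fun t => (Φ l - Φ t) / (l - t)) '' {t | t ∈ I ∧ t < l} with hS
  have hSne : S.Nonempty := ⟨_, ⟨l + -(ε/2), ⟨ha, by linarith⟩, rfl⟩⟩
  have hub : ∀ s ∈ S, s ≤ (Φ (l + ε/2) - Φ l) / (l + ε/2 - l) := by
    rintro s ⟨t, ⟨htI, htl⟩, rfl⟩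
    exact hΦ.slope_mono_adjacent htI hb htl (by linarith)
  refine ⟨sSup S, fun t htI => ?_⟩
  rcases lt_trichotomy t l with h | h | h
  · have hle : (Φ l - Φ t)/(l - t) ≤ sSup S := le_csSup ⟨_, hub⟩ ⟨t, ⟨htI, h⟩, rfl⟩
    have hlt : 0 < l - t := by linarith
    rw [div_le_iff₀ hlt] at hle
    nlinarith
  · simp [h]
  · have hle : sSup S ≤ (Φ t - Φ l)/(t - l) := csSup_le hSne (by
      rintro s ⟨u, ⟨huI, hul⟩, rfl⟩
      exact hΦ.slope_mono_adjacent huI htI hul h)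
    have hlt : 0 < t - l := by linarith
    rw [le_div_iff₀ hlt] at hle
    nlinarith

open ContinuousLinearMap in
lemma inner_mono' {f g : H →L[ℂ] H} (h : f ≤ g) (y : H) :
    (inner ℂ (f y) y : ℂ).re ≤ (inner ℂ (g y) y : ℂ).re := by
  have h' := ((le_def f g).mp h).re_inner_nonneg_left y
  simp only [sub_apply, inner_sub_left, map_sub, RCLike.re_to_complex] at h'
  linarith

open ContinuousLinearMap in
lemma inner_star_apply' (A : H →L[ℂ] H) (w z : H) :
    (inner ℂ ((star A) w) z : ℂ) = inner ℂ w (A z) := by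
  rw [star_eq_adjoint, adjoint_inner_left]

open ContinuousLinearMap in
lemma qX_inner (V T : (H →L[ℂ] H)ˣ) (z : H) :
    (inner ℂ (qX V T z) z : ℂ).re = ‖(V : H →L[ℂ] H) ((↑T⁻¹ : H →L[ℂ] H) z)‖ ^ 2 := by
  simp only [qX, ContinuousLinearMap.mul_apply, inner_star_apply', inner_self_eq_norm_sq_to_K]
  simp [← Complex.ofReal_pow]

lemma qX_isSelfAdjoint (V T : (H →L[ℂ] H)ˣ) : IsSelfAdjoint (qX V T) := by
  simp only [IsSelfAdjoint, qX, star_mul, star_star, mul_assoc]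

lemma inner_algebraMap' (r : ℝ) (y : H) :
    (inner ℂ ((algebraMap ℝ (H →L[ℂ] H) r) y) y : ℂ).re = r * ‖y‖ ^ 2 := by
  rw [Algebra.algebraMap_eq_smul_one]
  simp only [ContinuousLinearMap.smul_apply, ContinuousLinearMap.one_apply]
  rw [RCLike.real_smul_eq_coe_smul (K := ℂ), inner_smul_left]
  simp [← Complex.ofReal_pow, inner_self_eq_norm_sq_to_K]

lemma inner_real_smul_left (c : ℝ) (w y : H) :
    (inner ℂ (c • w) y : ℂ).re = c * (inner ℂ w y : ℂ).re := by
  rw [RCLike.real_smul_eq_coe_smul (K := ℂ), inner_smul_left]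
  simp

open ContinuousLinearMap in
lemma Tinv_apply_T (T : (H →L[ℂ] H)ˣ) (x : H) :
    (↑T⁻¹ : H →L[ℂ] H) ((T : H →L[ℂ] H) x) = x := by
  have h : ((↑T⁻¹ : H →L[ℂ] H) * (↑T : H →L[ℂ] H)) x = (1 : H →L[ℂ] H) x := by
    rw [T.inv_mul]
  simpa only [ContinuousLinearMap.mul_apply, ContinuousLinearMap.one_apply] using h

open ContinuousLinearMap in
lemma T_apply_Tinv (T : (H →L[ℂ] H)ˣ) (z : H) :
    (T : H →L[ℂ] H) ((↑T⁻¹ : H →L[ℂ] H) z) = z := by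
  have h : ((↑T : H →L[ℂ] H) * (↑T⁻¹ : H →L[ℂ] H)) z = (1 : H →L[ℂ] H) z := by
    rw [T.mul_inv]
  simpa only [ContinuousLinearMap.mul_apply, ContinuousLinearMap.one_apply] using h

set_option maxHeartbeats 1000000 in
open ContinuousLinearMap in
lemma qX_lower (V T : (H →L[ℂ] H)ˣ) {m : ℝ} (hm : 0 ≤ m)
    (hTV : ∀ x : H, m * ‖(T : H →L[ℂ] H) x‖ ≤ ‖(V : H →L[ℂ] H) x‖) :
    algebraMap ℝ (H →L[ℂ] H) (m ^ 2) ≤ qX V T := by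
  rw [le_def, isPositive_def']
  refine ⟨(qX_isSelfAdjoint V T).sub (IsSelfAdjoint.algebraMap _ (star_trivial _)), fun z => ?_⟩
  · rw [reApplyInnerSelf_apply]
    simp only [sub_apply, inner_sub_left, map_sub, RCLike.re_to_complex]
    rw [qX_inner, inner_algebraMap']
    have h1 := hTV ((↑T⁻¹ : H →L[ℂ] H) z)
    rw [T_apply_Tinv] at h1
    nlinarith [mul_self_le_mul_self (mul_nonneg hm (norm_nonneg z)) h1]

set_option maxHeartbeats 1000000 in
open ContinuousLinearMap in
lemma qX_upper (V T : (H →L[ℂ] H)ˣ) {M : ℝ} (hM : 0 ≤ M)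
    (hTV : ∀ x : H, ‖(V : H →L[ℂ] H) x‖ ≤ M * ‖(T : H →L[ℂ] H) x‖) :
    qX V T ≤ algebraMap ℝ (H →L[ℂ] H) (M ^ 2) := by
  rw [le_def, isPositive_def']
  refine ⟨(IsSelfAdjoint.algebraMap _ (star_trivial _)).sub (qX_isSelfAdjoint V T), fun z => ?_⟩
  · rw [reApplyInnerSelf_apply]
    simp only [sub_apply, inner_sub_left, map_sub, RCLike.re_to_complex]
    rw [qX_inner, inner_algebraMap']
    have h1 := hTV ((↑T⁻¹ : H →L[ℂ] H) z)
    rw [T_apply_Tinv] at h1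
    nlinarith [mul_self_le_mul_self (norm_nonneg ((V : H →L[ℂ] H) ((↑T⁻¹ : H →L[ℂ] H) z))) h1,
      norm_nonneg z]

set_option maxHeartbeats 1000000 in
theorem stmt4 (I : Set ℝ) (hIpos : I ⊆ Set.Ioi 0)
    (Φ : ℝ → ℝ) (hΦ : ConvexOn ℝ I Φ)
    (T V : (H →L[ℂ] H)ˣ) (m M : ℝ) (hm : 0 < m) (hmM : m < M)
    (hsub : Set.Icc (m ^ 2) (M ^ 2) ⊆ interior I)
    (hTV : ∀ x : H, m * ‖(T : H →L[ℂ] H) x‖ ≤ ‖(V : H →L[ℂ] H) x‖ ∧ ‖(V : H →L[ℂ] H) x‖ ≤ M * ‖(T : H →L[ℂ] H) x‖)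
    (x : H) (hx : x ≠ 0) :
    Φ (‖(V : H →L[ℂ] H) x‖ ^ 2 / ‖(T : H →L[ℂ] H) x‖ ^ 2) ≤
      (inner ℂ ((qPersp Φ V T) x) x : ℂ).re / ‖(T : H →L[ℂ] H) x‖ ^ 2 := by
  set X := qX V T with hX
  have hXsa : IsSelfAdjoint X := qX_isSelfAdjoint V T
  have hlow := qX_lower V T hm.le (fun z => (hTV z).1)
  have hup := qX_upper V T (hm.trans hmM).le (fun z => (hTV z).2)
  have hspec : ∀ t ∈ spectrum ℝ X, t ∈ Set.Icc (m ^ 2) (M ^ 2) := fun t ht =>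
    ⟨(algebraMap_le_iff_le_spectrum hXsa).mp hlow t ht,
     (le_algebraMap_iff_spectrum_le hXsa).mp hup t ht⟩
  have hΦI : ContinuousOn Φ (interior I) :=
    (hΦ.subset interior_subset (hΦ.1.interior)).continuousOn isOpen_interior
  have hΦc : ContinuousOn Φ (spectrum ℝ X) := hΦI.mono fun t ht => hsub (hspec t ht)
  -- T x ≠ 0
  have hTx : (T : H →L[ℂ] H) x ≠ 0 := by
    intro h
    apply hx
    have := Tinv_apply_T T x
    rw [h, map_zero] at this
    exact this.symm
  have hTxpos : (0 : ℝ) < ‖(T : H →L[ℂ] H) x‖ ^ 2 := pow_pos (norm_pos_iff.mpr hTx) 2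
  set l := ‖(V : H →L[ℂ] H) x‖ ^ 2 / ‖(T : H →L[ℂ] H) x‖ ^ 2 with hldef
  have hl1 : m ^ 2 ≤ l := (le_div_iff₀ hTxpos).mpr (by
    nlinarith [mul_self_le_mul_self (mul_nonneg hm.le (norm_nonneg ((T : H →L[ℂ] H) x))) (hTV x).1])
  have hl2 : l ≤ M ^ 2 := (div_le_iff₀ hTxpos).mpr (by
    nlinarith [mul_self_le_mul_self (norm_nonneg ((V : H →L[ℂ] H) x)) (hTV x).2])
  obtain ⟨c, hline⟩ := exists_support_line hΦ (hsub ⟨hl1, hl2⟩)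
  have hkey : algebraMap ℝ (H →L[ℂ] H) (Φ l - c * l) ≤ cfc (fun t => Φ t - c * t) X :=
    algebraMap_le_cfc _ _ _
      (fun t ht => by have := hline t (interior_subset (hsub (hspec t ht))); linarith)
      (hΦc.sub (by fun_prop)) hXsa
  have hrepr : cfc (fun t => Φ t - c * t) X = cfc Φ X - c • X := by
    rw [cfc_sub _ _ _ hΦc (by fun_prop), cfc_const_mul_id c X hXsa]
  rw [hrepr] at hkey
  set y := (T : H →L[ℂ] H) x with hy
  have hmono := inner_mono' hkey y
  rw [inner_algebraMap'] at hmono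
  have hXy : (inner ℂ (X y) y : ℂ).re = ‖(V : H →L[ℂ] H) x‖ ^ 2 := by
    rw [hX, qX_inner, hy, Tinv_apply_T]
  have hrhs : (inner ℂ ((cfc Φ X - c • X) y) y : ℂ).re
      = (inner ℂ ((cfc Φ X) y) y : ℂ).re - c * (inner ℂ (X y) y : ℂ).re := by
    simp [ContinuousLinearMap.sub_apply, inner_sub_left, ContinuousLinearMap.smul_apply,
      inner_real_smul_left]
  rw [hrhs, hXy] at hmono
  have hQ : (inner ℂ ((qPersp Φ V T) x) x : ℂ).re = (inner ℂ ((cfc Φ X) y) y : ℂ).re := by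
    simp only [qPersp, ContinuousLinearMap.mul_apply, inner_star_apply', ← hX, ← hy]
  rw [hQ, le_div_iff₀ hTxpos]
  have hly : l * ‖y‖ ^ 2 = ‖(V : H →L[ℂ] H) x‖ ^ 2 := by
    rw [hldef, hy, div_mul_cancel₀ _ (ne_of_gt hTxpos)]
  have h2 : c * (l * ‖y‖ ^ 2) = c * ‖(V : H →L[ℂ] H) x‖ ^ 2 := by rw [hly]
  nlinarith [hmono, h2]
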